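/- Suppose $u$ is $C^2$ with $u_{x_n}>0$ and $\Delta u = f(u)$ where the hodograph function $v$ is defined by $u(y',v(y',y_n))=h(y_n)$ with $h''=f(h)$, $h'>0$, and $v$ is $C^2$ with $v_n>0$. Then $v$ satisfies the divergence-form equation $\partial_n\Big[(1+\sum_{i<n}v_i^2)\frac{(h')^2}{2v_n^2}\Big] - \sum_{i<n}\partial_i\Big[\frac{(h')^2 v_i}{v_n}\Big] = h'(y_n) f(h(y_n))$, where $h'=h'(y_n)$. -/

import Mathlib

open Set Finset

/-- Partial derivative of `f` in the `i`-th coordinate direction. -/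
noncomputable def pd {m : ℕ} (f : EuclideanSpace ℝ (Fin m) → ℝ) (i : Fin m)
    (x : EuclideanSpace ℝ (Fin m)) : ℝ :=
  fderiv ℝ f x (EuclideanSpace.single i 1)

/-- Second partial derivative `∂_i ∂_j f`. -/
noncomputable def pd2 {m : ℕ} (f : EuclideanSpace ℝ (Fin m) → ℝ) (i j : Fin m)
    (x : EuclideanSpace ℝ (Fin m)) : ℝ :=
  pd (fun z => pd f j z) i x

/-- The hodograph point `(y', v(y))`: replace the last coordinate of `y` by `v y`. -/
noncomputable def hodPt {n : ℕ} (v : EuclideanSpace ℝ (Fin (n+1)) → ℝ)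
    (y : EuclideanSpace ℝ (Fin (n+1))) : EuclideanSpace ℝ (Fin (n+1)) :=
  WithLp.toLp 2 (Function.update y (Fin.last n) (v y))

lemma hodPt_eq' (n : ℕ) (v : EuclideanSpace ℝ (Fin (n+1)) → ℝ) (z : EuclideanSpace ℝ (Fin (n+1))) :
    hodPt v z = z + (v z - z (Fin.last n)) • EuclideanSpace.single (Fin.last n) (1:ℝ) := by
  ext j
  simp only [hodPt, PiLp.toLp_apply, Function.update_apply, PiLp.add_apply, PiLp.smul_apply,
    EuclideanSpace.single_apply, smul_eq_mul]
  by_cases hj : j = Fin.last n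
  · subst hj; simp
  · simp [hj]

lemma hod_hasFDerivAt' (n : ℕ) (v : EuclideanSpace ℝ (Fin (n+1)) → ℝ)
    (z : EuclideanSpace ℝ (Fin (n+1))) (Dv : EuclideanSpace ℝ (Fin (n+1)) →L[ℝ] ℝ)
    (hv : HasFDerivAt v Dv z) :
    HasFDerivAt (hodPt v)
      (ContinuousLinearMap.id ℝ _ +
        (Dv - EuclideanSpace.proj (Fin.last n)).smulRight
          (EuclideanSpace.single (Fin.last n) (1:ℝ))) z := by
  have h1 : HasFDerivAt (fun w : EuclideanSpace ℝ (Fin (n+1)) =>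
      w + (v w - w (Fin.last n)) • EuclideanSpace.single (Fin.last n) (1:ℝ))
      (ContinuousLinearMap.id ℝ _ +
        (Dv - EuclideanSpace.proj (Fin.last n)).smulRight
          (EuclideanSpace.single (Fin.last n) (1:ℝ))) z :=
    (hasFDerivAt_id z).add
      ((hv.sub (EuclideanSpace.proj (Fin.last n)).hasFDerivAt).smul_const _)
  exact h1.congr_of_eventuallyEq (Filter.Eventually.of_forall fun w => hodPt_eq' n v w)

lemma proj_hasFDerivAt' (n : ℕ) (z : EuclideanSpace ℝ (Fin (n+1))) :
    HasFDerivAt (fun w : EuclideanSpace ℝ (Fin (n+1)) => w (Fin.last n))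
      (EuclideanSpace.proj (Fin.last n) : EuclideanSpace ℝ (Fin (n+1)) →L[ℝ] ℝ) z :=
  (EuclideanSpace.proj (𝕜 := ℝ) (Fin.last n)).hasFDerivAt (x := z)

lemma first_order' (n : ℕ) (u v : EuclideanSpace ℝ (Fin (n+1)) → ℝ)
    (h h' : ℝ → ℝ)
    (B U : Set (EuclideanSpace ℝ (Fin (n+1))))
    (hB : IsOpen B) (hU : IsOpen U)
    (hu : ContDiffOn ℝ 2 u B)
    (hh1 : ∀ t, HasDerivAt h (h' t) t)
    (hv : ContDiffOn ℝ 2 v U)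
    (hmap : ∀ y ∈ U, hodPt v y ∈ B)
    (hrel : ∀ y ∈ U, u (hodPt v y) = h (y (Fin.last n))) :
    ∀ z ∈ U,
      fderiv ℝ u (hodPt v z) (EuclideanSpace.single (Fin.last n) 1)
        * fderiv ℝ v z (EuclideanSpace.single (Fin.last n) 1) = h' (z (Fin.last n)) ∧
      ∀ i : Fin n, fderiv ℝ u (hodPt v z) (EuclideanSpace.single i.castSucc 1)
        = -(fderiv ℝ u (hodPt v z) (EuclideanSpace.single (Fin.last n) 1)
            * fderiv ℝ v z (EuclideanSpace.single i.castSucc 1)) := by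
  intro z hz
  have hXB := hmap z hz
  have hvd : HasFDerivAt v (fderiv ℝ v z) z :=
    ((hv.contDiffAt (hU.mem_nhds hz)).differentiableAt (by norm_num)).hasFDerivAt
  have hud : HasFDerivAt u (fderiv ℝ u (hodPt v z)) (hodPt v z) :=
    ((hu.contDiffAt (hB.mem_nhds hXB)).differentiableAt (by norm_num)).hasFDerivAt
  have hcomp : HasFDerivAt (fun w => u (hodPt v w))
      ((fderiv ℝ u (hodPt v z)).comp
        (ContinuousLinearMap.id ℝ _ +
          (fderiv ℝ v z - EuclideanSpace.proj (Fin.last n)).smulRight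
            (EuclideanSpace.single (Fin.last n) (1:ℝ)))) z :=
    hud.comp z (hod_hasFDerivAt' n v z _ hvd)
  have hrhs : HasFDerivAt (fun w : EuclideanSpace ℝ (Fin (n+1)) => h (w (Fin.last n)))
      ((h' (z (Fin.last n))) • (EuclideanSpace.proj (Fin.last n) :
        EuclideanSpace ℝ (Fin (n+1)) →L[ℝ] ℝ)) z :=
    (hh1 (z (Fin.last n))).comp_hasFDerivAt z (proj_hasFDerivAt' n z)
  have hcomp' : HasFDerivAt (fun w : EuclideanSpace ℝ (Fin (n+1)) => h (w (Fin.last n)))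
      ((fderiv ℝ u (hodPt v z)).comp
        (ContinuousLinearMap.id ℝ _ +
          (fderiv ℝ v z - EuclideanSpace.proj (Fin.last n)).smulRight
            (EuclideanSpace.single (Fin.last n) (1:ℝ)))) z :=
    hcomp.congr_of_eventuallyEq
      (Filter.eventuallyEq_of_mem (hU.mem_nhds hz) fun w hw => (hrel w hw).symm)
  have heq := hcomp'.unique hrhs
  constructor
  · have h1 := DFunLike.congr_fun heq (EuclideanSpace.single (Fin.last n) (1:ℝ))
    simp only [ContinuousLinearMap.comp_apply, ContinuousLinearMap.add_apply,
      ContinuousLinearMap.id_apply, ContinuousLinearMap.smulRight_apply,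
      ContinuousLinearMap.sub_apply, ContinuousLinearMap.smul_apply,
      map_add, map_smul, smul_eq_mul, PiLp.proj_apply,
      EuclideanSpace.single_apply, if_true] at h1
    linear_combination h1
  · intro i
    have h2 := DFunLike.congr_fun heq (EuclideanSpace.single i.castSucc (1:ℝ))
    simp only [ContinuousLinearMap.comp_apply, ContinuousLinearMap.add_apply,
      ContinuousLinearMap.id_apply, ContinuousLinearMap.smulRight_apply,
      ContinuousLinearMap.sub_apply, ContinuousLinearMap.smul_apply,
      map_add, map_smul, smul_eq_mul, PiLp.proj_apply,
      EuclideanSpace.single_apply, if_true, if_neg (Fin.castSucc_lt_last i).ne'] at h2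
    linear_combination h2

lemma pd_hasFDerivAt' (n : ℕ) (u : EuclideanSpace ℝ (Fin (n+1)) → ℝ)
    (X : EuclideanSpace ℝ (Fin (n+1))) (hc2 : ContDiffAt ℝ 2 u X) (k : Fin (n+1)) :
    HasFDerivAt (fun x => fderiv ℝ u x (EuclideanSpace.single k 1))
      ((ContinuousLinearMap.apply ℝ ℝ (EuclideanSpace.single k (1:ℝ))).comp
        (fderiv ℝ (fderiv ℝ u) X)) X := by
  have hc1 : ContDiffAt ℝ 1 (fderiv ℝ u) X := hc2.fderiv_right (by norm_num)
  have hD2 : HasFDerivAt (fderiv ℝ u) (fderiv ℝ (fderiv ℝ u) X) X :=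
    (hc1.differentiableAt (by norm_num)).hasFDerivAt
  have := ((ContinuousLinearMap.apply ℝ ℝ (EuclideanSpace.single k (1:ℝ))).hasFDerivAt
      (x := fderiv ℝ u X)).comp X hD2
  exact this.congr_of_eventuallyEq (Filter.Eventually.of_forall fun w => rfl)

/-- The hodograph function `v` of a solution of `Δu = f(u)` satisfies the divergence-form
equation `∂ₙ[(1+Σᵢ vᵢ²)(h')²/(2vₙ²)] - Σᵢ ∂ᵢ[(h')² vᵢ/vₙ] = h' f(h)`. -/
theorem stmt13 (n : ℕ) (u v : EuclideanSpace ℝ (Fin (n+1)) → ℝ)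
    (f h h' : ℝ → ℝ)
    (B U : Set (EuclideanSpace ℝ (Fin (n+1))))
    (hB : IsOpen B) (hU : IsOpen U)
    (hf : Continuous f)
    (hu : ContDiffOn ℝ 2 u B)
    (hlap : ∀ x ∈ B, (∑ i : Fin (n+1), pd2 u i i x) = f (u x))
    (hun : ∀ x ∈ B, 0 < pd u (Fin.last n) x)
    (hh1 : ∀ t, HasDerivAt h (h' t) t)
    (hh2 : ∀ t, HasDerivAt h' (f (h t)) t)
    (hh'pos : ∀ t, 0 < h' t)
    (hv : ContDiffOn ℝ 2 v U)
    (hvn : ∀ y ∈ U, 0 < pd v (Fin.last n) y)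
    (hmap : ∀ y ∈ U, hodPt v y ∈ B)
    (hrel : ∀ y ∈ U, u (hodPt v y) = h (y (Fin.last n))) :
    ∀ y ∈ U,
      pd (fun z =>
          (1 + ∑ i : Fin n, (pd v i.castSucc z)^2) * (h' (z (Fin.last n)))^2
            / (2 * (pd v (Fin.last n) z)^2)) (Fin.last n) y
        - ∑ i : Fin n,
            pd (fun z =>
              (h' (z (Fin.last n)))^2 * pd v i.castSucc z / pd v (Fin.last n) z)
              i.castSucc y
      = h' (y (Fin.last n)) * f (h (y (Fin.last n))) := by
  intro y hy
  have hfirst := first_order' n u v h h' B U hB hU hu hh1 hv hmap hrel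
  have hXB := hmap y hy
  have hc2 : ContDiffAt ℝ 2 u (hodPt v y) := hu.contDiffAt (hB.mem_nhds hXB)
  have hvdy : HasFDerivAt v (fderiv ℝ v y) y :=
    ((hv.contDiffAt (hU.mem_nhds hy)).differentiableAt (by norm_num)).hasFDerivAt
  have hody := hod_hasFDerivAt' n v y (fderiv ℝ v y) hvdy
  have hg : ∀ k : Fin (n+1),
      HasFDerivAt (fun z => fderiv ℝ u (hodPt v z) (EuclideanSpace.single k 1))
        (((ContinuousLinearMap.apply ℝ ℝ (EuclideanSpace.single k (1:ℝ))).comp (fderiv ℝ (fderiv ℝ u) (hodPt v y))).comp (ContinuousLinearMap.id ℝ (EuclideanSpace ℝ (Fin (n+1))) + (fderiv ℝ v y - EuclideanSpace.proj (Fin.last n)).smulRight (EuclideanSpace.single (Fin.last n) (1:ℝ)))) y :=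
    fun k => (pd_hasFDerivAt' n u (hodPt v y) hc2 k).comp y hody
  have hq : ∀ j k : Fin (n+1), pd2 u j k (hodPt v y)
      = (fderiv ℝ (fderiv ℝ u) (hodPt v y)) (EuclideanSpace.single j 1) (EuclideanSpace.single k 1) := by
    intro j k
    have hf' := (pd_hasFDerivAt' n u (hodPt v y) hc2 k).fderiv
    simp only [pd2, pd]
    rw [hf']
    simp [ContinuousLinearMap.comp_apply, ContinuousLinearMap.apply_apply]
  have hlapX : (fderiv ℝ (fderiv ℝ u) (hodPt v y)) (EuclideanSpace.single (Fin.last n) 1) (EuclideanSpace.single (Fin.last n) 1)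
      + ∑ i : Fin n, (fderiv ℝ (fderiv ℝ u) (hodPt v y)) (EuclideanSpace.single i.castSucc 1) (EuclideanSpace.single i.castSucc 1)
      = f (h (y (Fin.last n))) := by
    have hl := hlap (hodPt v y) hXB
    rw [Fin.sum_univ_castSucc] at hl
    simp only [hq] at hl
    rw [add_comm, hl, hrel y hy]
  obtain ⟨hyn, hyi⟩ := hfirst y hy
  -- the A-term
  have hAeq : fderiv ℝ (fun z =>
        (1 + ∑ i : Fin n, (pd v i.castSucc z)^2) * (h' (z (Fin.last n)))^2
          / (2 * (pd v (Fin.last n) z)^2)) y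
      = fderiv ℝ (fun z => (1/2 : ℝ) *
          ∑ k : Fin (n+1), (fderiv ℝ u (hodPt v z) (EuclideanSpace.single k 1))^2) y := by
    apply Filter.EventuallyEq.fderiv_eq
    filter_upwards [hU.mem_nhds hy] with z hz
    obtain ⟨h1, h2⟩ := hfirst z hz
    have hvnz : fderiv ℝ v z (EuclideanSpace.single (Fin.last n) 1) ≠ 0 := by
      have := hvn z hz; simp only [pd] at this; exact ne_of_gt this
    simp only [pd]
    rw [Fin.sum_univ_castSucc (n := n)
      (f := fun k => (fderiv ℝ u (hodPt v z) (EuclideanSpace.single k 1))^2)]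
    have hcongr : ∀ i : Fin n,
        (fderiv ℝ u (hodPt v z) (EuclideanSpace.single i.castSucc 1))^2
        = (fderiv ℝ u (hodPt v z) (EuclideanSpace.single (Fin.last n) 1))^2
            * (fderiv ℝ v z (EuclideanSpace.single i.castSucc 1))^2 := by
      intro i; rw [h2 i]; ring
    rw [Finset.sum_congr rfl fun i _ => hcongr i, ← Finset.mul_sum, ← h1]
    field_simp
    ring
  have hsq : ∀ k : Fin (n+1),
      HasFDerivAt (fun z => (fderiv ℝ u (hodPt v z) (EuclideanSpace.single k 1))^2)
        ((2 * fderiv ℝ u (hodPt v y) (EuclideanSpace.single k 1)) • (((ContinuousLinearMap.apply ℝ ℝ (EuclideanSpace.single k (1:ℝ))).comp (fderiv ℝ (fderiv ℝ u) (hodPt v y))).comp (ContinuousLinearMap.id ℝ (EuclideanSpace ℝ (Fin (n+1))) + (fderiv ℝ v y - EuclideanSpace.proj (Fin.last n)).smulRight (EuclideanSpace.single (Fin.last n) (1:ℝ))))) y := by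
    intro k
    have heqf : (fun z => (fderiv ℝ u (hodPt v z) (EuclideanSpace.single k 1))^2)
        = fun z => fderiv ℝ u (hodPt v z) (EuclideanSpace.single k 1)
            * fderiv ℝ u (hodPt v z) (EuclideanSpace.single k 1) :=
      funext fun z => pow_two _
    rw [heqf]
    have hmm := (hg k).mul (hg k)
    rw [two_mul, add_smul]
    exact hmm
  have hPhi : HasFDerivAt (fun z => (1/2 : ℝ) *
      ∑ k : Fin (n+1), (fderiv ℝ u (hodPt v z) (EuclideanSpace.single k 1))^2)
      ((1/2 : ℝ) • ∑ k : Fin (n+1), (2 * fderiv ℝ u (hodPt v y) (EuclideanSpace.single k 1)) • (((ContinuousLinearMap.apply ℝ ℝ (EuclideanSpace.single k (1:ℝ))).comp (fderiv ℝ (fderiv ℝ u) (hodPt v y))).comp (ContinuousLinearMap.id ℝ (EuclideanSpace ℝ (Fin (n+1))) + (fderiv ℝ v y - EuclideanSpace.proj (Fin.last n)).smulRight (EuclideanSpace.single (Fin.last n) (1:ℝ))))) y :=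
    (HasFDerivAt.fun_sum fun k _ => hsq k).const_mul _
  have hA : pd (fun z =>
        (1 + ∑ i : Fin n, (pd v i.castSucc z)^2) * (h' (z (Fin.last n)))^2
          / (2 * (pd v (Fin.last n) z)^2)) (Fin.last n) y
      = ∑ k : Fin (n+1), fderiv ℝ u (hodPt v y) (EuclideanSpace.single k 1) * (fderiv ℝ v y (EuclideanSpace.single (Fin.last n) 1) * (fderiv ℝ (fderiv ℝ u) (hodPt v y)) (EuclideanSpace.single (Fin.last n) 1) (EuclideanSpace.single k 1)) := by
    show fderiv ℝ _ y (EuclideanSpace.single (Fin.last n) 1) = _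
    rw [hAeq, hPhi.fderiv]
    simp only [ContinuousLinearMap.smul_apply, ContinuousLinearMap.sum_apply,
      ContinuousLinearMap.comp_apply, ContinuousLinearMap.add_apply,
      ContinuousLinearMap.id_apply, ContinuousLinearMap.smulRight_apply,
      ContinuousLinearMap.sub_apply, PiLp.proj_apply, EuclideanSpace.single_apply,
      if_true, map_add, map_smul, smul_eq_mul, ContinuousLinearMap.apply_apply]
    rw [Finset.mul_sum]
    exact Finset.sum_congr rfl fun k _ => by ring
  -- the B-terms
  have hhp : HasFDerivAt (fun z : EuclideanSpace ℝ (Fin (n+1)) => h' (z (Fin.last n)))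
      ((f (h (y (Fin.last n)))) • (EuclideanSpace.proj (Fin.last n) :
        EuclideanSpace ℝ (Fin (n+1)) →L[ℝ] ℝ)) y :=
    (hh2 (y (Fin.last n))).comp_hasFDerivAt y (proj_hasFDerivAt' n y)
  have hBeq : ∀ i : Fin n, fderiv ℝ (fun z =>
        (h' (z (Fin.last n)))^2 * pd v i.castSucc z / pd v (Fin.last n) z) y
      = fderiv ℝ (fun z => -(h' (z (Fin.last n)) *
          fderiv ℝ u (hodPt v z) (EuclideanSpace.single i.castSucc 1))) y := by
    intro i
    apply Filter.EventuallyEq.fderiv_eq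
    filter_upwards [hU.mem_nhds hy] with z hz
    obtain ⟨h1, h2⟩ := hfirst z hz
    have hvnz : fderiv ℝ v z (EuclideanSpace.single (Fin.last n) 1) ≠ 0 := by
      have := hvn z hz; simp only [pd] at this; exact ne_of_gt this
    simp only [pd]
    rw [h2 i, ← h1]
    field_simp
  have hB : ∀ i : Fin n, pd (fun z =>
        (h' (z (Fin.last n)))^2 * pd v i.castSucc z / pd v (Fin.last n) z) i.castSucc y
      = -(h' (y (Fin.last n)) * ((fderiv ℝ (fderiv ℝ u) (hodPt v y)) (EuclideanSpace.single i.castSucc 1) (EuclideanSpace.single i.castSucc 1)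
            + fderiv ℝ v y (EuclideanSpace.single i.castSucc 1) * (fderiv ℝ (fderiv ℝ u) (hodPt v y)) (EuclideanSpace.single (Fin.last n) 1) (EuclideanSpace.single i.castSucc 1))) := by
    intro i
    show fderiv ℝ _ y (EuclideanSpace.single i.castSucc 1) = _
    rw [hBeq i]
    have hPsi := (hhp.fun_mul (hg i.castSucc)).fun_neg
    rw [hPsi.fderiv]
    simp only [ContinuousLinearMap.neg_apply, ContinuousLinearMap.add_apply,
      ContinuousLinearMap.smul_apply, ContinuousLinearMap.comp_apply,
      ContinuousLinearMap.id_apply, ContinuousLinearMap.smulRight_apply,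
      ContinuousLinearMap.sub_apply, PiLp.proj_apply, EuclideanSpace.single_apply,
      if_true, if_neg (Fin.castSucc_lt_last i).ne', map_add, map_smul, smul_eq_mul,
      ContinuousLinearMap.apply_apply]
    ring
  -- assemble
  rw [hA, Finset.sum_congr rfl fun i _ => hB i]
  rw [Fin.sum_univ_castSucc (n := n) (f := fun k => fderiv ℝ u (hodPt v y) (EuclideanSpace.single k 1) * (fderiv ℝ v y (EuclideanSpace.single (Fin.last n) 1) * (fderiv ℝ (fderiv ℝ u) (hodPt v y)) (EuclideanSpace.single (Fin.last n) 1) (EuclideanSpace.single k 1)))]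
  have e1 : (∑ i : Fin n, fderiv ℝ u (hodPt v y) (EuclideanSpace.single i.castSucc 1) * (fderiv ℝ v y (EuclideanSpace.single (Fin.last n) 1) * (fderiv ℝ (fderiv ℝ u) (hodPt v y)) (EuclideanSpace.single (Fin.last n) 1) (EuclideanSpace.single i.castSucc 1)))
      = (fderiv ℝ u (hodPt v y) (EuclideanSpace.single (Fin.last n) 1) * fderiv ℝ v y (EuclideanSpace.single (Fin.last n) 1)) * -(∑ i : Fin n, fderiv ℝ v y (EuclideanSpace.single i.castSucc 1) * (fderiv ℝ (fderiv ℝ u) (hodPt v y)) (EuclideanSpace.single (Fin.last n) 1) (EuclideanSpace.single i.castSucc 1)) := by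
    have hc : ∀ i : Fin n, fderiv ℝ u (hodPt v y) (EuclideanSpace.single i.castSucc 1) * (fderiv ℝ v y (EuclideanSpace.single (Fin.last n) 1) * (fderiv ℝ (fderiv ℝ u) (hodPt v y)) (EuclideanSpace.single (Fin.last n) 1) (EuclideanSpace.single i.castSucc 1))
        = -((fderiv ℝ u (hodPt v y) (EuclideanSpace.single (Fin.last n) 1) * fderiv ℝ v y (EuclideanSpace.single (Fin.last n) 1)) * (fderiv ℝ v y (EuclideanSpace.single i.castSucc 1) * (fderiv ℝ (fderiv ℝ u) (hodPt v y)) (EuclideanSpace.single (Fin.last n) 1) (EuclideanSpace.single i.castSucc 1))) := by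
      intro i; rw [hyi i]; ring
    rw [Finset.sum_congr rfl fun i _ => hc i, Finset.sum_neg_distrib,
      ← Finset.mul_sum, mul_neg]
  have e3 : (∑ i : Fin n, -(h' (y (Fin.last n)) * ((fderiv ℝ (fderiv ℝ u) (hodPt v y)) (EuclideanSpace.single i.castSucc 1) (EuclideanSpace.single i.castSucc 1)
        + fderiv ℝ v y (EuclideanSpace.single i.castSucc 1) * (fderiv ℝ (fderiv ℝ u) (hodPt v y)) (EuclideanSpace.single (Fin.last n) 1) (EuclideanSpace.single i.castSucc 1))))
      = -(h' (y (Fin.last n)) * (∑ i : Fin n, (fderiv ℝ (fderiv ℝ u) (hodPt v y)) (EuclideanSpace.single i.castSucc 1) (EuclideanSpace.single i.castSucc 1))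
          + h' (y (Fin.last n)) * (∑ i : Fin n, fderiv ℝ v y (EuclideanSpace.single i.castSucc 1) * (fderiv ℝ (fderiv ℝ u) (hodPt v y)) (EuclideanSpace.single (Fin.last n) 1) (EuclideanSpace.single i.castSucc 1))) := by
    have hc : ∀ i : Fin n, -(h' (y (Fin.last n)) * ((fderiv ℝ (fderiv ℝ u) (hodPt v y)) (EuclideanSpace.single i.castSucc 1) (EuclideanSpace.single i.castSucc 1)
          + fderiv ℝ v y (EuclideanSpace.single i.castSucc 1) * (fderiv ℝ (fderiv ℝ u) (hodPt v y)) (EuclideanSpace.single (Fin.last n) 1) (EuclideanSpace.single i.castSucc 1)))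
        = -(h' (y (Fin.last n)) * (fderiv ℝ (fderiv ℝ u) (hodPt v y)) (EuclideanSpace.single i.castSucc 1) (EuclideanSpace.single i.castSucc 1)
            + h' (y (Fin.last n)) * (fderiv ℝ v y (EuclideanSpace.single i.castSucc 1) * (fderiv ℝ (fderiv ℝ u) (hodPt v y)) (EuclideanSpace.single (Fin.last n) 1) (EuclideanSpace.single i.castSucc 1))) := by
      intro i; ring
    rw [Finset.sum_congr rfl fun i _ => hc i, Finset.sum_neg_distrib,
      Finset.sum_add_distrib, ← Finset.mul_sum, ← Finset.mul_sum]
  rw [e1, e3]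
  linear_combination ((fderiv ℝ (fderiv ℝ u) (hodPt v y)) (EuclideanSpace.single (Fin.last n) 1) (EuclideanSpace.single (Fin.last n) 1)
      - (∑ i : Fin n, fderiv ℝ v y (EuclideanSpace.single i.castSucc 1) * (fderiv ℝ (fderiv ℝ u) (hodPt v y)) (EuclideanSpace.single (Fin.last n) 1) (EuclideanSpace.single i.castSucc 1))) * hyn
    + h' (y (Fin.last n)) * hlapX
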